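/- In type A₂ with exchange relations from the pentagon, the variables defined by y₃ = (q₂ y₂ + q₄ q₅)/y₁, y₄ = (q₃ y₃ + q₅ q₁)/y₂, y₅ = (q₄ y₄ + q₁ q₂)/y₃ satisfy (q₅ y₅ + q₂ q₃)/y₄ = y₁ and (q₁ y₁ + q₃ q₄)/y₅ = y₂; in particular y₅ = (q₃ q₄ + q₁ y₁)/y₂. -/
import Mathlib


open MvPolynomial

/-- The image of a nonzero polynomial in the fraction field is nonzero. -/
lemma map_ne_zero_of_eval_one_ne_zero (p : MvPolynomial (Fin 7) ℚ)
    (h : eval (fun _ => (1 : ℚ)) p ≠ 0) :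
    algebraMap (MvPolynomial (Fin 7) ℚ) (FractionRing (MvPolynomial (Fin 7) ℚ)) p ≠ 0 := by
  intro hp
  apply h
  have hp0 : p = 0 := (map_eq_zero_iff _ (IsFractionRing.injective _ _)).mp hp
  simp [hp0]

set_option maxHeartbeats 2000000 in
/-- In type `A₂`, the pentagon exchange relations close up: with
`y₃ = (q₂y₂ + q₄q₅)/y₁`, `y₄ = (q₃y₃ + q₅q₁)/y₂`, `y₅ = (q₄y₄ + q₁q₂)/y₃`
in the field `ℚ(q₁,…,q₅,y₁,y₂)`, one has `(q₅y₅ + q₂q₃)/y₄ = y₁` and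
`(q₁y₁ + q₃q₄)/y₅ = y₂`; in particular `y₅ = (q₃q₄ + q₁y₁)/y₂`. -/
theorem pentagon_exchange_relations_close
    (q₁ q₂ q₃ q₄ q₅ y₁ y₂ : FractionRing (MvPolynomial (Fin 7) ℚ))
    (hq₁ : q₁ = algebraMap (MvPolynomial (Fin 7) ℚ) (FractionRing (MvPolynomial (Fin 7) ℚ)) (X 0))
    (hq₂ : q₂ = algebraMap (MvPolynomial (Fin 7) ℚ) (FractionRing (MvPolynomial (Fin 7) ℚ)) (X 1))
    (hq₃ : q₃ = algebraMap (MvPolynomial (Fin 7) ℚ) (FractionRing (MvPolynomial (Fin 7) ℚ)) (X 2))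
    (hq₄ : q₄ = algebraMap (MvPolynomial (Fin 7) ℚ) (FractionRing (MvPolynomial (Fin 7) ℚ)) (X 3))
    (hq₅ : q₅ = algebraMap (MvPolynomial (Fin 7) ℚ) (FractionRing (MvPolynomial (Fin 7) ℚ)) (X 4))
    (hy₁ : y₁ = algebraMap (MvPolynomial (Fin 7) ℚ) (FractionRing (MvPolynomial (Fin 7) ℚ)) (X 5))
    (hy₂ : y₂ = algebraMap (MvPolynomial (Fin 7) ℚ) (FractionRing (MvPolynomial (Fin 7) ℚ)) (X 6))
    (y₃ y₄ y₅ : FractionRing (MvPolynomial (Fin 7) ℚ))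
    (h₃ : y₃ = (q₂ * y₂ + q₄ * q₅) / y₁)
    (h₄ : y₄ = (q₃ * y₃ + q₅ * q₁) / y₂)
    (h₅ : y₅ = (q₄ * y₄ + q₁ * q₂) / y₃) :
    (q₅ * y₅ + q₂ * q₃) / y₄ = y₁ ∧ (q₁ * y₁ + q₃ * q₄) / y₅ = y₂ ∧
      y₅ = (q₃ * q₄ + q₁ * y₁) / y₂ := by
  have hy₁0 : y₁ ≠ 0 := by
    rw [hy₁]; exact map_ne_zero_of_eval_one_ne_zero _ (by norm_num)
  have hy₂0 : y₂ ≠ 0 := by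
    rw [hy₂]; exact map_ne_zero_of_eval_one_ne_zero _ (by norm_num)
  have A : y₃ * y₁ = q₂ * y₂ + q₄ * q₅ := by
    rw [h₃, div_mul_cancel₀ _ hy₁0]
  have B : y₄ * y₂ = q₃ * y₃ + q₅ * q₁ := by
    rw [h₄, div_mul_cancel₀ _ hy₂0]
  have hy₃0 : y₃ ≠ 0 := by
    intro h
    have h2 : q₂ * y₂ + q₄ * q₅ = 0 := by rw [← A, h, zero_mul]
    rw [hq₂, hq₄, hq₅, hy₂] at h2
    simp only [← map_mul, ← map_add] at h2
    exact map_ne_zero_of_eval_one_ne_zero _ (by norm_num) h2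
  have C : y₅ * y₃ = q₄ * y₄ + q₁ * q₂ := by
    rw [h₅, div_mul_cancel₀ _ hy₃0]
  have hy₄0 : y₄ ≠ 0 := by
    intro h
    have hB : q₃ * y₃ + q₅ * q₁ = 0 := by rw [← B, h, zero_mul]
    have h2 : q₃ * (q₂ * y₂ + q₄ * q₅) + q₅ * q₁ * y₁ = 0 := by
      linear_combination y₁ * hB - q₃ * A
    rw [hq₁, hq₂, hq₃, hq₄, hq₅, hy₁, hy₂] at h2
    simp only [← map_mul, ← map_add] at h2
    exact map_ne_zero_of_eval_one_ne_zero _ (by norm_num) h2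
  have hy₅0 : y₅ ≠ 0 := by
    intro h
    have hC : q₄ * y₄ + q₁ * q₂ = 0 := by rw [← C, h, zero_mul]
    have h2 : q₄ * (q₃ * (q₂ * y₂ + q₄ * q₅) + q₅ * q₁ * y₁) + q₁ * q₂ * (y₁ * y₂) = 0 := by
      linear_combination y₁ * y₂ * hC - q₄ * y₁ * B - q₃ * q₄ * A
    rw [hq₁, hq₂, hq₃, hq₄, hq₅, hy₁, hy₂] at h2
    simp only [← map_mul, ← map_add] at h2
    exact map_ne_zero_of_eval_one_ne_zero _ (by norm_num) h2
  have hN₃ : y₃ * y₁ ≠ 0 := mul_ne_zero hy₃0 hy₁0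
  have key3 : y₅ * y₂ = q₃ * q₄ + q₁ * y₁ := by
    apply mul_left_cancel₀ hN₃
    linear_combination y₁ * y₂ * C + q₄ * y₁ * B + q₃ * q₄ * A - (q₃ * q₄ + q₁ * y₁) * A
  refine ⟨?_, ?_, ?_⟩
  · rw [div_eq_iff hy₄0]
    apply mul_left_cancel₀ hy₂0
    linear_combination q₅ * key3 - y₁ * B - q₃ * A
  · rw [div_eq_iff hy₅0]
    linear_combination -key3
  · rw [eq_div_iff hy₂0]
    exact key3
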